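/- arXiv:1509.03697 — 3 statements merged into one kernel-verified Lean document; each statement's English description precedes it below -/
import Mathlib

section
/- The matrix identity I_n − X A_τ⁻¹ Xᵀ = (I_n + X D_τ Xᵀ)⁻¹ holds; in particular I_n − X A_τ⁻¹ Xᵀ is symmetric positive definite, so the quantity C_τ = Ỹᵀ(I_n − X A_τ⁻¹ Xᵀ)Ỹ is strictly positive whenever Ỹ ≠ 0. -/
open Matrix

/-- `D_τ⁻¹ = diag(τ₁,…,τ_p)⁻¹`. -/
noncomputable def Dinv (p : ℕ) (τ : Fin p → ℝ) : Matrix (Fin p) (Fin p) ℝ :=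
  Matrix.diagonal fun j => (τ j)⁻¹

/-- `A_τ = XᵀX + D_τ⁻¹`. -/
noncomputable def Amat (n p : ℕ) (X : Matrix (Fin n) (Fin p) ℝ) (τ : Fin p → ℝ) :
    Matrix (Fin p) (Fin p) ℝ :=
  Xᵀ * X + Dinv p τ

/-- `I_n − X A_τ⁻¹ Xᵀ = (I_n + X D_τ Xᵀ)⁻¹`; in particular this matrix is
symmetric positive definite, so `C_τ = Ỹᵀ(I_n − X A_τ⁻¹ Xᵀ)Ỹ > 0` whenever `Ỹ ≠ 0`. -/
theorem residual_matrix_identity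
    (n p : ℕ) (hn : 0 < n) (hp : 0 < p)
    (X : Matrix (Fin n) (Fin p) ℝ) (Y : Fin n → ℝ)
    (τ : Fin p → ℝ) (hτ : ∀ j, 0 < τ j) :
    (1 - X * (Amat n p X τ)⁻¹ * Xᵀ) = (1 + X * Matrix.diagonal τ * Xᵀ)⁻¹
    ∧ (1 - X * (Amat n p X τ)⁻¹ * Xᵀ).PosDef
    ∧ (Y ≠ 0 → 0 < Y ⬝ᵥ ((1 - X * (Amat n p X τ)⁻¹ * Xᵀ) *ᵥ Y)) := by
  set D : Matrix (Fin p) (Fin p) ℝ := Matrix.diagonal τ with hD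
  have hXtX : (Xᵀ * X).PosSemidef := by
    simpa using Matrix.posSemidef_conjTranspose_mul_self X
  have hDinvPD : (Dinv p τ).PosDef :=
    Matrix.PosDef.diagonal fun j => inv_pos.mpr (hτ j)
  have hDPD : D.PosDef := Matrix.PosDef.diagonal hτ
  have hA : (Amat n p X τ).PosDef := Matrix.PosDef.posSemidef_add hXtX hDinvPD
  have hAu : IsUnit (Amat n p X τ) := hA.isUnit
  have hDD : D * Dinv p τ = 1 := by
    rw [hD, Dinv, Matrix.diagonal_mul_diagonal]
    convert Matrix.diagonal_one using 2
    exact funext fun j => mul_inv_cancel₀ (hτ j).ne'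
  -- D * A = D * XᵀX + 1
  have hDA : D * Amat n p X τ = D * (Xᵀ * X) + 1 := by
    rw [Amat, Matrix.mul_add, hDD]
  have hAinv : Amat n p X τ * (Amat n p X τ)⁻¹ = 1 :=
    Matrix.mul_nonsing_inv _ (Matrix.isUnit_iff_isUnit_det _ |>.1 hAu)
  -- (1 + X D Xᵀ)(1 - X A⁻¹ Xᵀ) = 1
  have key : (1 + X * D * Xᵀ) * (1 - X * (Amat n p X τ)⁻¹ * Xᵀ) = 1 := by
    have hD' : (D * (Xᵀ * X) + 1) * (Amat n p X τ)⁻¹ = D := by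
      rw [← hDA, mul_assoc, hAinv, mul_one]
    have expand : (1 + X * D * Xᵀ) * (1 - X * (Amat n p X τ)⁻¹ * Xᵀ)
        = 1 + X * D * Xᵀ - X * ((D * (Xᵀ * X) + 1) * (Amat n p X τ)⁻¹) * Xᵀ := by
      simp only [Matrix.mul_add, Matrix.add_mul, Matrix.mul_sub, Matrix.sub_mul,
        one_mul, mul_one, Matrix.mul_assoc]
      abel
    rw [expand, hD']
    abel
  have hBpd : (1 + X * D * Xᵀ).PosDef := by
    have : (X * D * Xᵀ).PosSemidef := by
      simpa using hDPD.posSemidef.mul_mul_conjTranspose_same X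
    exact Matrix.PosDef.add_posSemidef Matrix.PosDef.one this
  have heq : (1 - X * (Amat n p X τ)⁻¹ * Xᵀ) = (1 + X * D * Xᵀ)⁻¹ :=
    (Matrix.inv_eq_right_inv key).symm
  have hpd : (1 - X * (Amat n p X τ)⁻¹ * Xᵀ).PosDef := heq ▸ hBpd.inv
  refine ⟨heq, hpd, fun hY => ?_⟩
  have := hpd.re_dotProduct_pos (𝕜 := ℝ) hY
  simpa using this
end

section
/- Multivariate Student-t normalization: let M be a symmetric positive definite real p×p matrix, m ∈ ℝ^p, c > 0 and ν > 0. Then the integral over x ∈ ℝ^p of [c + (x − m)ᵀ M (x − m)]^{−(ν+p)/2} with respect to Lebesgue measure equals Γ(ν/2) · π^{p/2} · det(M)^{−1/2} / (Γ((ν+p)/2) · c^{ν/2}). -/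
open Matrix MeasureTheory Real Set

lemma exp_split (p : ℕ) (t c : ℝ) (x : Fin p → ℝ) :
    Real.exp (-((c + x ⬝ᵥ x) * t)) = Real.exp (-(c * t)) * ∏ i, Real.exp (-t * (x i) ^ 2) := by
  rw [← Real.exp_sum, ← Real.exp_add]
  congr 1
  have hxx : x ⬝ᵥ x = ∑ i, x i * x i := rfl
  rw [hxx]
  have : ∀ i ∈ Finset.univ, -t * x i ^ 2 = x i * x i * (-t) := fun i _ => by ring
  rw [Finset.sum_congr rfl this, ← Finset.sum_mul]
  ring

lemma gauss_step (p : ℕ) (t : ℝ) (ht : 0 < t) (c : ℝ) :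
    ∫ x : Fin p → ℝ, Real.exp (-((c + x ⬝ᵥ x) * t)) =
      Real.exp (-(c * t)) * Real.pi ^ ((p : ℝ) / 2) * t ^ (-(p : ℝ) / 2) := by
  simp_rw [exp_split p t c]
  rw [MeasureTheory.integral_const_mul, MeasureTheory.volume_pi,
    MeasureTheory.integral_fintype_prod_eq_pow (ι := Fin p) (f := fun y : ℝ => Real.exp (-t * y ^ 2)),
    integral_gaussian]
  rw [Real.sqrt_eq_rpow, ← Real.rpow_natCast (_ ^ (1/2 : ℝ)), ← Real.rpow_mul (by positivity),
    Real.div_rpow pi_pos.le ht.le]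
  simp only [Fintype.card_fin]
  rw [div_eq_mul_inv, ← Real.rpow_neg ht.le, mul_assoc]
  norm_num
  ring_nf

lemma gauss_int (p : ℕ) (c ν : ℝ) (hc : 0 < c) (hν : 0 < ν) :
    ∫ x : Fin p → ℝ, (c + x ⬝ᵥ x) ^ (-(ν + p) / 2) =
      Real.Gamma (ν / 2) * Real.pi ^ ((p : ℝ) / 2) / (Real.Gamma ((ν + p) / 2) * c ^ (ν / 2)) := by
  set s : ℝ := (ν + p) / 2 with hs_def
  have hs : 0 < s := by positivity
  have hq : ∀ x : Fin p → ℝ, 0 ≤ x ⬝ᵥ x := fun x => Finset.sum_nonneg fun i _ => mul_self_nonneg _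
  have hcq : ∀ x : Fin p → ℝ, 0 < c + x ⬝ᵥ x := fun x => by linarith [hq x]
  set F : (Fin p → ℝ) × ℝ → ℝ :=
    fun z => z.2 ^ (s - 1) * Real.exp (-((c + z.1 ⬝ᵥ z.1) * z.2)) with hF_def
  have hFmeas : Measurable F := by
    have h1 : Measurable (fun z : (Fin p → ℝ) × ℝ => z.1 ⬝ᵥ z.1) := by
      have : (fun z : (Fin p → ℝ) × ℝ => z.1 ⬝ᵥ z.1) = fun z => ∑ i, z.1 i * z.1 i := rfl
      rw [this]; fun_prop
    fun_prop
  have hInner : ∀ t ∈ Ioi (0:ℝ), Integrable (fun x : Fin p → ℝ => F (x, t)) := by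
    intro t ht
    have h0 : (fun x : Fin p → ℝ => F (x, t)) =
        fun x => (t ^ (s - 1) * Real.exp (-(c * t))) * ∏ i, Real.exp (-t * (x i) ^ 2) := by
      funext x
      rw [hF_def]
      simp only
      rw [exp_split p t c x]
      ring
    rw [h0]
    exact (Integrable.fintype_prod (f := fun _ : Fin p => fun y : ℝ => Real.exp (-t * y ^ 2))
      (fun i => integrable_exp_neg_mul_sq ht)).const_mul _
  have hInnerVal : ∀ t ∈ Ioi (0:ℝ), (∫ x : Fin p → ℝ, F (x, t)) =
      Real.pi ^ ((p : ℝ) / 2) * (t ^ (s - 1 - p / 2) * Real.exp (-(c * t))) := by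
    intro t ht
    have : (fun x : Fin p → ℝ => F (x, t)) =
        fun x => t ^ (s - 1) * Real.exp (-((c + x ⬝ᵥ x) * t)) := rfl
    rw [this, MeasureTheory.integral_const_mul, gauss_step p t ht c]
    rw [show t ^ (s-1) * (Real.exp (-(c*t)) * Real.pi ^ ((p:ℝ)/2) * t ^ (-(p:ℝ)/2)) =
      Real.pi ^ ((p:ℝ)/2) * ((t ^ (s-1) * t ^ (-(p:ℝ)/2)) * Real.exp (-(c*t))) from by ring]
    rw [← Real.rpow_add ht]
    rw [show s - 1 + -(p:ℝ)/2 = s - 1 - p/2 from by ring]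
  have hexp2 : (-1:ℝ) < s - 1 - p / 2 := by
    rw [hs_def]; have : ((p:ℝ)) ≥ 0 := Nat.cast_nonneg p; nlinarith
  have hProdInt : Integrable F ((volume : Measure (Fin p → ℝ)).prod (volume.restrict (Ioi 0))) := by
    rw [MeasureTheory.integrable_prod_iff' hFmeas.aestronglyMeasurable]
    constructor
    · filter_upwards [ae_restrict_mem measurableSet_Ioi] with t ht using hInner t ht
    · have key : IntegrableOn
          (fun t : ℝ => Real.pi ^ ((p:ℝ)/2) * (t ^ (s - 1 - p/2) * Real.exp (-(c * t)))) (Ioi 0) := by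
        apply Integrable.const_mul
        have h2 := integrableOn_rpow_mul_exp_neg_mul_rpow hexp2 zero_lt_one hc
        apply h2.congr_fun ?_ measurableSet_Ioi
        intro x hx
        simp only [Real.rpow_one, neg_mul]
      apply key.congr
      filter_upwards [ae_restrict_mem measurableSet_Ioi] with t ht
      rw [← hInnerVal t ht]
      rw [MeasureTheory.integral_congr_ae (Filter.Eventually.of_forall fun x => (Real.norm_of_nonneg
        (mul_nonneg (Real.rpow_nonneg (le_of_lt ht) _) (Real.exp_nonneg _))).symm)]
  have swap := MeasureTheory.integral_integral_swap (f := fun x t => F (x, t)) hProdInt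
  have hL : (∫ x : Fin p → ℝ, ∫ t in Ioi (0:ℝ), F (x, t)) =
      Real.Gamma s * ∫ x : Fin p → ℝ, (c + x ⬝ᵥ x) ^ (-s) := by
    have h1 : ∀ x : Fin p → ℝ, (∫ t in Ioi (0:ℝ), F (x, t)) =
        Real.Gamma s * (c + x ⬝ᵥ x) ^ (-s) := by
      intro x
      have : (fun t : ℝ => F (x, t)) = fun t => t ^ (s - 1) * Real.exp (-((c + x ⬝ᵥ x) * t)) := rfl
      rw [this, Real.integral_rpow_mul_exp_neg_mul_Ioi hs (hcq x)]
      rw [one_div, Real.inv_rpow (hcq x).le, ← Real.rpow_neg (hcq x).le, mul_comm]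
    simp_rw [h1]
    exact MeasureTheory.integral_const_mul _ _
  have hR : (∫ t in Ioi (0:ℝ), ∫ x : Fin p → ℝ, F (x, t)) =
      Real.pi ^ ((p:ℝ)/2) * ((1/c) ^ (ν/2) * Real.Gamma (ν/2)) := by
    rw [setIntegral_congr_fun measurableSet_Ioi hInnerVal, MeasureTheory.integral_const_mul]
    congr 1
    rw [show s - 1 - (p:ℝ)/2 = ν/2 - 1 from by rw [hs_def]; ring]
    exact Real.integral_rpow_mul_exp_neg_mul_Ioi (by positivity) hc
  rw [hL, hR] at swap
  have hGs : Real.Gamma s ≠ 0 := (Real.Gamma_pos_of_pos hs).ne'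
  have hgoal : (∫ x : Fin p → ℝ, (c + x ⬝ᵥ x) ^ (-(ν + p) / 2)) =
      ∫ x : Fin p → ℝ, (c + x ⬝ᵥ x) ^ (-s) := by
    congr 1; funext x; rw [show -(ν + (p:ℝ)) / 2 = -s from by rw [hs_def]; ring]
  rw [hgoal]
  have hI : (∫ x : Fin p → ℝ, (c + x ⬝ᵥ x) ^ (-s)) =
      Real.pi ^ ((p:ℝ)/2) * ((1/c) ^ (ν/2) * Real.Gamma (ν/2)) / Real.Gamma s := by
    field_simp
    linarith [swap]
  rw [hI, one_div, Real.inv_rpow hc.le]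
  have hcp : (0:ℝ) < c ^ (ν/2) := Real.rpow_pos_of_pos hc _
  field_simp

/-- multivariate Student-t normalization. For a symmetric positive
definite `p×p` matrix `M`, `m ∈ ℝ^p`, `c > 0`, `ν > 0`,
`∫_{ℝ^p} [c + (x−m)ᵀ M (x−m)]^{−(ν+p)/2} dx
   = Γ(ν/2) π^{p/2} det(M)^{−1/2} / (Γ((ν+p)/2) c^{ν/2})`. -/
theorem student_t_normalization
    (p : ℕ) (hp : 0 < p)
    (M : Matrix (Fin p) (Fin p) ℝ) (hM : M.PosDef)
    (m : Fin p → ℝ) (c ν : ℝ) (hc : 0 < c) (hν : 0 < ν) :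
    (∫ x : Fin p → ℝ,
        (c + (x - m) ⬝ᵥ (M *ᵥ (x - m))) ^ (-(ν + p) / 2))
    = Real.Gamma (ν / 2) * Real.pi ^ ((p : ℝ) / 2) * M.det ^ (-(1 : ℝ) / 2)
        / (Real.Gamma ((ν + p) / 2) * c ^ (ν / 2)) := by
  set e : ℝ := -(ν + p) / 2 with he_def
  -- step 1 : translation
  have step1 : (∫ x : Fin p → ℝ, (c + (x - m) ⬝ᵥ (M *ᵥ (x - m))) ^ e)
      = ∫ x : Fin p → ℝ, (c + x ⬝ᵥ (M *ᵥ x)) ^ e :=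
    MeasureTheory.integral_sub_right_eq_self (fun y => (c + y ⬝ᵥ (M *ᵥ y)) ^ e) m
  -- the square root of M
  obtain ⟨S, hSh, hSS⟩ : ∃ S : Matrix (Fin p) (Fin p) ℝ, Sᵀ = S ∧ S * S = M := by
    classical
    open scoped MatrixOrder in
    obtain ⟨X, hX, -, hXX⟩ := CFC.exists_sqrt_of_isSelfAdjoint_of_quasispectrumRestricts
      hM.posSemidef.isHermitian (QuasispectrumRestricts.nnreal_of_nonneg hM.posSemidef.nonneg)
    refine ⟨X, ?_, hXX⟩
    have h := hX.star_eq
    rw [Matrix.star_eq_conjTranspose, Matrix.conjTranspose_eq_transpose_of_trivial] at h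
    exact h
  have hMdet : 0 < M.det := hM.det_pos
  have hdet2 : S.det * S.det = M.det := by rw [← Matrix.det_mul, hSS]
  have hSdet : S.det ≠ 0 := by
    intro h; rw [h, mul_zero] at hdet2; exact hMdet.ne' hdet2.symm
  have habs : |S.det| = M.det ^ ((1:ℝ)/2) := by
    have h1 : |S.det| ^ (2:ℕ) = M.det := by rw [sq_abs, sq, hdet2]
    rw [← h1, ← Real.rpow_natCast |S.det| 2, ← Real.rpow_mul (abs_nonneg _)]
    norm_num
  -- quadratic form rewrite
  have hquad : ∀ y : Fin p → ℝ, y ⬝ᵥ (M *ᵥ y) = (S *ᵥ y) ⬝ᵥ (S *ᵥ y) := by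
    intro y
    rw [← hSS, ← Matrix.mulVec_mulVec, Matrix.dotProduct_mulVec]
    congr 1
    rw [← hSh, Matrix.vecMul_transpose, hSh]
  -- continuity of the target function
  have hg : Continuous (fun y : Fin p → ℝ => (c + y ⬝ᵥ y) ^ e) := by
    have hbase : Continuous (fun y : Fin p → ℝ => c + y ⬝ᵥ y) := by
      have : (fun y : Fin p → ℝ => c + y ⬝ᵥ y) = fun y => c + ∑ i, y i * y i := rfl
      rw [this]; fun_prop
    apply hbase.rpow_const
    intro y
    left
    have : 0 ≤ y ⬝ᵥ y := Finset.sum_nonneg fun i _ => mul_self_nonneg _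
    positivity
  -- step 2 : change of variables x ↦ S x
  have hmap := Real.map_matrix_volume_pi_eq_smul_volume_pi (M := S) hSdet
  have step2 : (∫ x : Fin p → ℝ, (c + x ⬝ᵥ (M *ᵥ x)) ^ e)
      = |S.det⁻¹| * ∫ y : Fin p → ℝ, (c + y ⬝ᵥ y) ^ e := by
    have h1 : (∫ x : Fin p → ℝ, (c + x ⬝ᵥ (M *ᵥ x)) ^ e)
        = ∫ x : Fin p → ℝ, (c + (Matrix.toLin' S x) ⬝ᵥ (Matrix.toLin' S x)) ^ e := by
      congr 1; funext x; rw [hquad, Matrix.toLin'_apply]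
    have h2 : (∫ y : Fin p → ℝ, (c + y ⬝ᵥ y) ^ e ∂(Measure.map (⇑(Matrix.toLin' S)) volume))
        = ∫ x : Fin p → ℝ, (c + (Matrix.toLin' S x) ⬝ᵥ (Matrix.toLin' S x)) ^ e :=
      MeasureTheory.integral_map
        (Matrix.toLin' S).continuous_of_finiteDimensional.measurable.aemeasurable
        (by rw [hmap]; exact hg.aestronglyMeasurable)
    rw [h1, ← h2, hmap, MeasureTheory.integral_smul_measure, smul_eq_mul,
      ENNReal.toReal_ofReal (abs_nonneg _)]
  rw [step1, step2, gauss_int p c ν hc hν, abs_inv, habs,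
    show -(1:ℝ)/2 = -((1:ℝ)/2) from by ring, Real.rpow_neg hMdet.le]
  ring
end

section
/- For every λ > 0, the integral over τ ∈ (0,∞)^p of det(XᵀX + D_τ⁻¹)^{1/2} · exp(−(λ²/6)(τ₁ + ⋯ + τ_p)) with respect to Lebesgue measure on (0,∞)^p is finite. -/
open Matrix MeasureTheory Real

section aux

variable {p : ℕ}

/-- trace of a Hermitian real matrix equals the sum of eigenvalues -/
lemma my_trace_eq_sum_eigenvalues {A : Matrix (Fin p) (Fin p) ℝ} (hA : A.IsHermitian) :
    A.trace = ∑ i, hA.eigenvalues i := by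
  conv_lhs => rw [hA.spectral_theorem]
  rw [Unitary.conjStarAlgAut_apply, Matrix.trace_mul_comm, ← mul_assoc, Unitary.coe_star_mul_self, one_mul,
    Matrix.trace_diagonal]
  simp [RCLike.ofReal]

lemma my_det_le_trace_pow {A : Matrix (Fin p) (Fin p) ℝ} (hA : A.PosSemidef) :
    A.det ≤ A.trace ^ p := by
  rw [hA.isHermitian.det_eq_prod_eigenvalues, my_trace_eq_sum_eigenvalues hA.isHermitian]
  have hnn : ∀ i, 0 ≤ hA.isHermitian.eigenvalues i := hA.eigenvalues_nonneg
  have hle : ∀ i : Fin p, hA.isHermitian.eigenvalues i ≤ ∑ j, hA.isHermitian.eigenvalues j :=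
    fun i => Finset.single_le_sum (fun j _ => hnn j) (Finset.mem_univ i)
  calc (∏ i, (hA.isHermitian.eigenvalues i : ℝ))
      ≤ ∏ _i : Fin p, ∑ j, hA.isHermitian.eigenvalues j :=
        Finset.prod_le_prod (fun i _ => hnn i) (fun i _ => hle i)
    _ = (∑ j, hA.isHermitian.eigenvalues j) ^ p := by
        simp [Finset.prod_const, Finset.card_univ]


/-- PSD-ness of `F (XᵀX) F + 1` and the determinant factorization/bound. -/
lemma my_det_bound {n : ℕ} (X : Matrix (Fin n) (Fin p) ℝ) (τ : Fin p → ℝ)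
    (hτ : ∀ j, 0 < τ j) :
    (Xᵀ * X + Dinv p τ).det
      ≤ (∏ j, (τ j)⁻¹) * ((p : ℝ) + (Xᵀ * X).trace * ∑ j, τ j) ^ p := by
  set F : Matrix (Fin p) (Fin p) ℝ := Matrix.diagonal fun j => Real.sqrt (τ j) with hF
  set E : Matrix (Fin p) (Fin p) ℝ := Matrix.diagonal fun j => (Real.sqrt (τ j))⁻¹ with hE
  have hsq : ∀ j, Real.sqrt (τ j) * Real.sqrt (τ j) = τ j :=
    fun j => Real.mul_self_sqrt (hτ j).le
  have hsne : ∀ j, Real.sqrt (τ j) ≠ 0 := fun j => (Real.sqrt_pos.mpr (hτ j)).ne'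
  have hEF : E * F = 1 := by
    rw [hE, hF, Matrix.diagonal_mul_diagonal, ← Matrix.diagonal_one]
    exact congrArg Matrix.diagonal (funext fun j => inv_mul_cancel₀ (hsne j))
  have hFE : F * E = 1 := by
    rw [hE, hF, Matrix.diagonal_mul_diagonal, ← Matrix.diagonal_one]
    exact congrArg Matrix.diagonal (funext fun j => mul_inv_cancel₀ (hsne j))
  set M : Matrix (Fin p) (Fin p) ℝ := F * (Xᵀ * X) * F with hM
  have hEE : E * E = Dinv p τ := by
    rw [hE, Matrix.diagonal_mul_diagonal]
    unfold Dinv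
    exact congrArg Matrix.diagonal (funext fun j => by rw [← mul_inv, hsq j])
  have hid : Xᵀ * X + Dinv p τ = E * (1 + M) * E := by
    have : E * (1 + M) * E = E * E + (E * F) * (Xᵀ * X) * (F * E) := by
      rw [hM]; noncomm_ring
    rw [this, hEF, hFE, one_mul, mul_one, hEE, add_comm]
  -- positivity of 1 + M
  have hMpsd : M.PosSemidef := by
    have h1 : M = (X * F)ᴴ * (X * F) := by
      rw [Matrix.conjTranspose_eq_transpose_of_trivial, Matrix.transpose_mul, hM]
      rw [show Fᵀ = F from by rw [hF, Matrix.diagonal_transpose]]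
      rw [Matrix.mul_assoc, Matrix.mul_assoc, Matrix.mul_assoc]
    rw [h1]; exact Matrix.posSemidef_conjTranspose_mul_self _
  have h1Mpsd : ((1 : Matrix (Fin p) (Fin p) ℝ) + M).PosSemidef :=
    Matrix.PosSemidef.add Matrix.PosSemidef.one hMpsd
  -- trace bound
  have hdiagXX : ∀ j, 0 ≤ (Xᵀ * X) j j := by
    intro j
    rw [Matrix.mul_apply]
    exact Finset.sum_nonneg fun i _ => by
      rw [Matrix.transpose_apply]; exact mul_self_nonneg _
  have htrM : M.trace = ∑ j, τ j * (Xᵀ * X) j j := by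
    rw [Matrix.trace]
    congr 1; funext j
    rw [Matrix.diag_apply, hM, Matrix.mul_diagonal, Matrix.diagonal_mul]
    rw [show Real.sqrt (τ j) * (Xᵀ * X) j j * Real.sqrt (τ j)
        = Real.sqrt (τ j) * Real.sqrt (τ j) * ((Xᵀ * X) j j) from by ring, hsq j]
  have htrM_le : M.trace ≤ (Xᵀ * X).trace * ∑ j, τ j := by
    rw [htrM, Matrix.trace, Finset.sum_mul]
    refine Finset.sum_le_sum fun j _ => ?_
    rw [Matrix.diag_apply]
    have : τ j ≤ ∑ k, τ k :=
      Finset.single_le_sum (fun k _ => (hτ k).le) (Finset.mem_univ j)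
    calc τ j * (Xᵀ * X) j j ≤ (∑ k, τ k) * (Xᵀ * X) j j :=
          mul_le_mul_of_nonneg_right this (hdiagXX j)
      _ = (Xᵀ * X) j j * ∑ k, τ k := mul_comm _ _
  have htrM_nonneg : 0 ≤ M.trace := by
    rw [htrM]
    exact Finset.sum_nonneg fun j _ => mul_nonneg (hτ j).le (hdiagXX j)
  -- determinant factorization
  have hdet : (Xᵀ * X + Dinv p τ).det = (∏ j, (τ j)⁻¹) * (1 + M).det := by
    rw [hid, Matrix.det_mul, Matrix.det_mul, hE, Matrix.det_diagonal]
    rw [mul_comm, ← mul_assoc, ← Finset.prod_mul_distrib]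
    congr 1
    exact Finset.prod_congr rfl fun j _ => by rw [← mul_inv, hsq j]
  rw [hdet]
  have h1 : (1 + M).det ≤ ((p : ℝ) + (Xᵀ * X).trace * ∑ j, τ j) ^ p := by
    calc (1 + M).det ≤ (1 + M).trace ^ p := my_det_le_trace_pow h1Mpsd
      _ ≤ ((p : ℝ) + (Xᵀ * X).trace * ∑ j, τ j) ^ p := by
          apply pow_le_pow_left₀
          · rw [Matrix.trace_add, Matrix.trace_one]
            positivity
          · rw [Matrix.trace_add, Matrix.trace_one]
            simpa using htrM_le
  have hprodpos : 0 ≤ ∏ j, (τ j)⁻¹ :=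
    Finset.prod_nonneg fun j _ => (inv_pos.mpr (hτ j)).le
  exact mul_le_mul_of_nonneg_left h1 hprodpos

end aux

set_option maxHeartbeats 1000000 in
/-- for every `λ > 0`, the integral over `τ ∈ (0,∞)^p` of
`det(XᵀX + D_τ⁻¹)^{1/2} exp(−(λ²/6)(τ₁+⋯+τ_p))` is finite. -/
theorem det_integral_finite
    (n p : ℕ) (hn : 0 < n) (hp : 0 < p)
    (X : Matrix (Fin n) (Fin p) ℝ)
    (l : ℝ) (hl : 0 < l) :
    (∫⁻ τ in {τ : Fin p → ℝ | ∀ j, 0 < τ j},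
        ENNReal.ofReal ((Xᵀ * X + Dinv p τ).det ^ ((1 : ℝ) / 2)
          * Real.exp (-(l ^ 2 / 6) * ∑ j, τ j))) < ⊤ := by
  have hp1 : (1 : ℝ) ≤ (p : ℝ) := by exact_mod_cast hp
  have hpR : (0 : ℝ) < (p : ℝ) := by exact_mod_cast hp
  set a : ℝ := l ^ 2 / 6 with ha
  have ha0 : (0 : ℝ) < a := by positivity
  set C : ℝ := (Xᵀ * X).trace with hC
  have hdiagXX : ∀ j, 0 ≤ (Xᵀ * X) j j := by
    intro j
    rw [Matrix.mul_apply]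
    exact Finset.sum_nonneg fun i _ => by
      rw [Matrix.transpose_apply]; exact mul_self_nonneg _
  have hC0 : (0 : ℝ) ≤ C := Finset.sum_nonneg fun j _ => hdiagXX j
  set b : ℝ := a / (2 * p) with hb
  have hb0 : (0 : ℝ) < b := by rw [hb]; positivity
  set K : ℝ := ((p : ℝ) + C / b) ^ p with hK
  have hK0 : (0 : ℝ) ≤ K := by positivity
  set g : ℝ → ℝ :=
    fun t => if 0 < t then t ^ (-(1 / 2) : ℝ) * Real.exp (-(a / 2) * t) else 0 with hg
  -- integrability of g
  have hgint : Integrable g := by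
    have h1 : IntegrableOn (fun t : ℝ => t ^ (-(1 / 2) : ℝ) * Real.exp (-(a / 2) * t))
        (Set.Ioi 0) := by
      have h := integrableOn_rpow_mul_exp_neg_mul_rpow (p := 1) (s := -(1 / 2)) (b := a / 2)
        (by norm_num) (by norm_num) (by positivity)
      refine h.congr_fun (fun x hx => ?_) measurableSet_Ioi
      simp only [Real.rpow_one]
    have h2 := (integrable_indicator_iff (μ := volume) measurableSet_Ioi).2 h1
    have hgeq : g = (Set.Ioi (0:ℝ)).indicator
        (fun t : ℝ => t ^ (-(1 / 2) : ℝ) * Real.exp (-(a / 2) * t)) := by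
      funext t; simp [hg, Set.indicator_apply, Set.mem_Ioi]
    rw [hgeq]; exact h2
  have hGint : Integrable (fun τ : Fin p → ℝ => K * ∏ j, g (τ j)) :=
    (Integrable.fintype_prod (𝕜 := ℝ) (f := fun _ : Fin p => g) fun _ => hgint).const_mul K
  -- pointwise bound
  have hbound : ∀ τ ∈ {τ : Fin p → ℝ | ∀ j, 0 < τ j},
      (Xᵀ * X + Dinv p τ).det ^ ((1 : ℝ) / 2) * Real.exp (-(l ^ 2 / 6) * ∑ j, τ j)
        ≤ K * ∏ j, g (τ j) := by
    intro τ hτ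
    simp only [Set.mem_setOf_eq] at hτ
    set s : ℝ := ∑ j, τ j with hs
    have hs0 : 0 ≤ s := Finset.sum_nonneg fun j _ => (hτ j).le
    have hXX : (Xᵀ * X).PosSemidef := by
      rw [← Matrix.conjTranspose_eq_transpose_of_trivial]
      exact Matrix.posSemidef_conjTranspose_mul_self X
    have hD : (Dinv p τ).PosDef :=
      Matrix.posDef_diagonal_iff.mpr fun j => inv_pos.2 (hτ j)
    have hdetpos : 0 < (Xᵀ * X + Dinv p τ).det :=
      (Matrix.PosDef.posSemidef_add hXX hD).det_pos
    set y : ℝ := (p : ℝ) + C * s with hy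
    have hy1 : (1 : ℝ) ≤ y := by
      have : 0 ≤ C * s := mul_nonneg hC0 hs0
      rw [hy]; linarith
    have hy0 : (0 : ℝ) ≤ y := le_trans zero_le_one hy1
    have hprod0 : (0 : ℝ) ≤ ∏ j, (τ j)⁻¹ :=
      Finset.prod_nonneg fun j _ => (inv_pos.2 (hτ j)).le
    -- step: det^{1/2} ≤ (∏ τ⁻¹)^{1/2} * y^p
    have step1 : (Xᵀ * X + Dinv p τ).det ^ ((1 : ℝ) / 2)
        ≤ (∏ j, (τ j)⁻¹) ^ ((1 : ℝ) / 2) * y ^ p := by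
      have h1 := my_det_bound X τ hτ
      have h2 : (Xᵀ * X + Dinv p τ).det ^ ((1 : ℝ) / 2)
          ≤ ((∏ j, (τ j)⁻¹) * y ^ p) ^ ((1 : ℝ) / 2) :=
        Real.rpow_le_rpow hdetpos.le h1 (by norm_num)
      have h3 : ((∏ j, (τ j)⁻¹) * y ^ p) ^ ((1 : ℝ) / 2)
          = (∏ j, (τ j)⁻¹) ^ ((1 : ℝ) / 2) * (y ^ p) ^ ((1 : ℝ) / 2) :=
        Real.mul_rpow hprod0 (pow_nonneg hy0 p)
      have h4 : (y ^ p) ^ ((1 : ℝ) / 2) ≤ y ^ p := by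
        have hyp1 : (1 : ℝ) ≤ y ^ p := one_le_pow₀ hy1
        calc (y ^ p) ^ ((1 : ℝ) / 2) ≤ (y ^ p) ^ (1 : ℝ) :=
              Real.rpow_le_rpow_of_exponent_le hyp1 (by norm_num)
          _ = y ^ p := Real.rpow_one _
      calc (Xᵀ * X + Dinv p τ).det ^ ((1 : ℝ) / 2)
          ≤ (∏ j, (τ j)⁻¹) ^ ((1 : ℝ) / 2) * (y ^ p) ^ ((1 : ℝ) / 2) := h3 ▸ h2
        _ ≤ (∏ j, (τ j)⁻¹) ^ ((1 : ℝ) / 2) * y ^ p :=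
            mul_le_mul_of_nonneg_left h4 (Real.rpow_nonneg hprod0 _)
    -- step: y^p ≤ K * exp (a/2 * s)
    have step2 : y ^ p ≤ K * Real.exp (a / 2 * s) := by
      have h1 : y ≤ ((p : ℝ) + C / b) * (1 + b * s) := by
        have e1 : ((p : ℝ) + C / b) * (1 + b * s)
            = (p : ℝ) + C / b * (b * s) + ((p : ℝ) * (b * s) + C / b) := by ring
        have e2 : C / b * (b * s) = C * s := by field_simp
        have h3 : 0 ≤ (p : ℝ) * (b * s) := by positivity
        have h4 : 0 ≤ C / b := by positivity
        rw [e1, e2, hy]; linarith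
      have h2 : 1 + b * s ≤ Real.exp (b * s) := by
        have := Real.add_one_le_exp (b * s); linarith
      have h5 : y ≤ ((p : ℝ) + C / b) * Real.exp (b * s) :=
        h1.trans (mul_le_mul_of_nonneg_left h2 (by positivity))
      calc y ^ p ≤ (((p : ℝ) + C / b) * Real.exp (b * s)) ^ p :=
            pow_le_pow_left₀ hy0 h5 p
        _ = K * Real.exp (b * s) ^ p := by rw [hK, mul_pow]
        _ = K * Real.exp ((p : ℝ) * (b * s)) := by rw [Real.exp_nat_mul]
        _ = K * Real.exp (a / 2 * s) := by
            congr 1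
            rw [hb]; field_simp
    -- combine
    have hexp : Real.exp (a / 2 * s) * Real.exp (-(l ^ 2 / 6) * s)
        = Real.exp (-(a / 2) * s) := by
      rw [← Real.exp_add, ← ha]; congr 1; ring
    have hrw1 : (∏ j, (τ j)⁻¹) ^ ((1 : ℝ) / 2) = ∏ j, (τ j) ^ (-(1 / 2) : ℝ) := by
      rw [← Real.finset_prod_rpow _ _ (fun j _ => (inv_pos.2 (hτ j)).le)]
      exact Finset.prod_congr rfl fun j _ => by
        rw [Real.inv_rpow (hτ j).le, ← Real.rpow_neg (hτ j).le]
    have hrw2 : Real.exp (-(a / 2) * s) = ∏ j, Real.exp (-(a / 2) * τ j) := by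
      rw [← Real.exp_sum]; congr 1; rw [hs, Finset.mul_sum]
    have hrw3 : (∏ j, (τ j) ^ (-(1 / 2) : ℝ)) * ∏ j, Real.exp (-(a / 2) * τ j)
        = ∏ j, g (τ j) := by
      rw [← Finset.prod_mul_distrib]
      exact Finset.prod_congr rfl fun j _ => by rw [hg]; simp [if_pos (hτ j)]
    calc (Xᵀ * X + Dinv p τ).det ^ ((1 : ℝ) / 2) * Real.exp (-(l ^ 2 / 6) * s)
        ≤ ((∏ j, (τ j)⁻¹) ^ ((1 : ℝ) / 2) * (K * Real.exp (a / 2 * s)))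
            * Real.exp (-(l ^ 2 / 6) * s) := by
          apply mul_le_mul_of_nonneg_right _ (Real.exp_nonneg _)
          exact step1.trans (mul_le_mul_of_nonneg_left step2 (Real.rpow_nonneg hprod0 _))
      _ = K * ((∏ j, (τ j)⁻¹) ^ ((1 : ℝ) / 2)
            * (Real.exp (a / 2 * s) * Real.exp (-(l ^ 2 / 6) * s))) := by ring
      _ = K * ∏ j, g (τ j) := by rw [hexp, hrw1, hrw2, hrw3]
  -- measurability of the set
  have hSmeas : MeasurableSet {τ : Fin p → ℝ | ∀ j, 0 < τ j} := by
    have : {τ : Fin p → ℝ | ∀ j, 0 < τ j}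
        = Set.pi Set.univ (fun _ : Fin p => Set.Ioi (0 : ℝ)) := by
      ext τ; simp [Set.mem_pi]
    rw [this]
    exact MeasurableSet.univ_pi fun _ => measurableSet_Ioi
  have h1 : (∫⁻ τ in {τ : Fin p → ℝ | ∀ j, 0 < τ j},
        ENNReal.ofReal ((Xᵀ * X + Dinv p τ).det ^ ((1 : ℝ) / 2)
          * Real.exp (-(l ^ 2 / 6) * ∑ j, τ j)))
      ≤ ∫⁻ τ in {τ : Fin p → ℝ | ∀ j, 0 < τ j},
          ENNReal.ofReal (K * ∏ j, g (τ j)) :=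
    setLIntegral_mono' hSmeas fun τ hτ => ENNReal.ofReal_le_ofReal (hbound τ hτ)
  have h2 := setLIntegral_le_lintegral (μ := (volume : Measure (Fin p → ℝ))) {τ : Fin p → ℝ | ∀ j, 0 < τ j}
    (fun τ => ENNReal.ofReal (K * ∏ j, g (τ j)))
  have h3 : (∫⁻ τ : Fin p → ℝ, ENNReal.ofReal (K * ∏ j, g (τ j))) < ⊤ :=
    hGint.lintegral_lt_top
  exact lt_of_le_of_lt (h1.trans h2) h3
end
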